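/- For a trace-class operator ρ on L²(ℝ) and the projection Π = Θ(−X) onto functions supported in (−∞,0], suppose tr(Θ(−X)ρ) = 1 − ε with 0 ≤ ε < 1 and ρ = |ψ⟩⟨ψ| a pure state. Define ρ̂ = Θ(−X)ρΘ(−X)/(1−ε). Then for any self-adjoint bounded operator Ω with ‖Ω‖ ≤ 1, tr(ρ̂ Ω) ≥ tr(ρΩ)/(1−ε) − 2√(ε/(1−ε)) − ε/(1−ε). -/

import Mathlib

/-- For a projection `P`, a unit vector `ψ` with `ε = 1 - ⟨ψ|P|ψ⟩ ∈ [0,1)`, and a self-adjoint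
operator `Ω` with `‖Ω‖ ≤ 1`, the projected normalized state `ρ̂ = PρP/(1-ε)` satisfies
`tr(ρ̂Ω) ≥ tr(ρΩ)/(1-ε) - 2√(ε/(1-ε)) - ε/(1-ε)`. -/
theorem stmt8 {H : Type*} [NormedAddCommGroup H] [InnerProductSpace ℂ H]
    (P Ω : H →L[ℂ] H)
    (hPidem : ∀ v, P (P v) = P v)
    (hPsa : ∀ v w : H, (inner ℂ (P v) w : ℂ) = inner ℂ v (P w))
    (hΩsa : ∀ v w : H, (inner ℂ (Ω v) w : ℂ) = inner ℂ v (Ω w))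
    (hΩn : ‖Ω‖ ≤ 1)
    (ψ : H) (hψ : ‖ψ‖ = 1) (ε : ℝ)
    (hε : ε = 1 - (inner ℂ ψ (P ψ) : ℂ).re) (hε0 : 0 ≤ ε) (hε1 : ε < 1) :
    (inner ℂ (P ψ) (Ω (P ψ)) : ℂ).re / (1 - ε) ≥
      (inner ℂ ψ (Ω ψ) : ℂ).re / (1 - ε) - 2 * Real.sqrt (ε / (1 - ε)) - ε / (1 - ε) := by
  have h1 : (0:ℝ) < 1 - ε := by linarith
  set p := P ψ with hp
  set q := ψ - p with hqdef
  have hψeq : ψ = p + q := by simp [hqdef]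
  -- ⟨ψ, Pψ⟩ real part
  have hre : (inner ℂ ψ (P ψ) : ℂ).re = 1 - ε := by linarith [hε]
  have hp2 : ‖p‖^2 = 1 - ε := by
    have : (inner ℂ p p : ℂ) = inner ℂ ψ (P ψ) := by
      rw [hp, hPsa, hPidem]
    rw [← hre, ← this, ← inner_self_eq_norm_sq (𝕜 := ℂ) p]
    rfl
  have hq2 : ‖q‖^2 = ε := by
    have h := @norm_sub_sq ℂ _ _ _ _ ψ p
    have hre' : RCLike.re (inner ℂ ψ p : ℂ) = 1 - ε := by
      rw [hp]; exact hre
    rw [hqdef, h, hψ, hre', hp2]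
    ring
  have hpn : ‖p‖ = Real.sqrt (1 - ε) := by
    rw [← hp2]; exact (Real.sqrt_sq (norm_nonneg p)).symm
  have hqn : ‖q‖ = Real.sqrt ε := by
    rw [← hq2]; exact (Real.sqrt_sq (norm_nonneg q)).symm
  set s := Real.sqrt (ε * (1 - ε)) with hs
  have hpq : ‖p‖ * ‖q‖ = s := by
    rw [hpn, hqn, hs, Real.sqrt_mul hε0, mul_comm]
  -- cross term bound
  have cross : ∀ a b : H, |(inner ℂ a (Ω b) : ℂ).re| ≤ ‖a‖ * ‖b‖ := by
    intro a b
    calc |(inner ℂ a (Ω b) : ℂ).re| ≤ ‖(inner ℂ a (Ω b) : ℂ)‖ :=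
          Complex.abs_re_le_norm _
      _ = ‖(inner ℂ a (Ω b) : ℂ)‖ := rfl
      _ ≤ ‖a‖ * ‖Ω b‖ := norm_inner_le_norm a (Ω b)
      _ ≤ ‖a‖ * (‖Ω‖ * ‖b‖) := by
          gcongr; exacts [Ω.le_opNorm b]
      _ ≤ ‖a‖ * (1 * ‖b‖) := by
          gcongr
      _ = ‖a‖ * ‖b‖ := by ring
  have c1 : (inner ℂ p (Ω q) : ℂ).re ≤ s := by
    have := (abs_le.mp (cross p q)).2; rw [hpq] at this; exact this
  have c2 : (inner ℂ q (Ω p) : ℂ).re ≤ s := by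
    have := (abs_le.mp (cross q p)).2
    rw [mul_comm, hpq] at this; exact this
  have c3 : (inner ℂ q (Ω q) : ℂ).re ≤ ε := by
    calc (inner ℂ q (Ω q) : ℂ).re ≤ ‖q‖ * ‖q‖ := by
          have h := (abs_le.mp (cross q q)).2; exact h
      _ = ε := by rw [← pow_two, hq2]
  have expand : (inner ℂ ψ (Ω ψ) : ℂ).re =
      (inner ℂ p (Ω p) : ℂ).re + (inner ℂ p (Ω q) : ℂ).re +
      (inner ℂ q (Ω p) : ℂ).re + (inner ℂ q (Ω q) : ℂ).re := by
    conv_lhs => rw [hψeq]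
    rw [map_add, inner_add_left, inner_add_right, inner_add_right]
    simp [Complex.add_re]
    ring
  have key : (inner ℂ ψ (Ω ψ) : ℂ).re ≤ (inner ℂ p (Ω p) : ℂ).re + 2 * s + ε := by
    rw [expand]; linarith
  have hsqrt : Real.sqrt (ε / (1 - ε)) = s / (1 - ε) := by
    rw [hs]
    rw [show ε / (1 - ε) = ε * (1 - ε) / (1 - ε)^2 by field_simp]
    rw [Real.sqrt_div (by positivity), Real.sqrt_sq (le_of_lt h1)]
  rw [ge_iff_le, hsqrt]
  have h2 : ((inner ℂ ψ (Ω ψ) : ℂ).re - 2 * s - ε) / (1 - ε) ≤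
      (inner ℂ p (Ω p) : ℂ).re / (1 - ε) := by
    exact (div_le_div_iff_of_pos_right h1).mpr (by linarith)
  calc (inner ℂ ψ (Ω ψ) : ℂ).re / (1 - ε) - 2 * (s / (1 - ε)) - ε / (1 - ε)
      = ((inner ℂ ψ (Ω ψ) : ℂ).re - 2 * s - ε) / (1 - ε) := by ring
    _ ≤ (inner ℂ p (Ω p) : ℂ).re / (1 - ε) := h2
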